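/- Let ε₁ ≤ … ≤ εₙ be positive reals, define r₁ = ε₁ and r_{k+1} = min{ε_{k+1}, (Σ_{i=1}^k rᵢ² + 8)/(Σ_{i=1}^k rᵢ)} for 1 ≤ k ≤ n−1, and let D(ε) = {x ∈ ℝⁿ : xᵢ ≥ 0 for all i, x₁ = ε₁, and xᵢ/εᵢ ≥ x_j/ε_j for all i < j}. Then the point r = (r₁,…,rₙ) is a local minimum of f(x) = (Σᵢ xᵢ² + 8)/(4 (Σᵢ xᵢ)²) on D(ε): there is a neighborhood U of r in ℝⁿ such that f(r) ≤ f(x) for all x ∈ D(ε) ∩ U. -/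

import Mathlib

private lemma adpm_ind (n : ℕ) (ε r : ℕ → ℝ)
    (hpos : ∀ i < n, 0 < ε i)
    (hmono : ∀ i j : ℕ, i ≤ j → j < n → ε i ≤ ε j)
    (hr0 : r 0 = ε 0)
    (hrec : ∀ k : ℕ, k + 1 < n → r (k + 1) = min (ε (k + 1))
      (((∑ i ∈ Finset.range (k + 1), (r i) ^ 2) + 8) / (∑ i ∈ Finset.range (k + 1), r i))) :
    ∀ k, 1 ≤ k → k ≤ n → ∀ i < k, 0 < r i ∧ r i ≤ ε i ∧
      r i ≤ ((∑ j ∈ Finset.range k, (r j) ^ 2) + 8) / (∑ j ∈ Finset.range k, r j) ∧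
      (r i = ε i ∨ r i = ((∑ j ∈ Finset.range k, (r j) ^ 2) + 8) / (∑ j ∈ Finset.range k, r j)) := by
  intro k
  induction k with
  | zero => omega
  | succ m IH =>
    intro _ hmn i him
    rcases Nat.eq_zero_or_pos m with hm0 | hm1
    · -- base case k = 1
      subst hm0
      have : i = 0 := by omega
      subst this
      have hε0 : 0 < ε 0 := hpos 0 (by omega)
      have hr0pos : 0 < r 0 := hr0 ▸ hε0
      simp only [zero_add, Finset.sum_range_one]
      refine ⟨hr0pos, le_of_eq hr0, ?_, Or.inl hr0⟩
      rw [le_div_iff₀ hr0pos]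
      nlinarith [sq_nonneg (r 0)]
    · -- inductive step: m ≥ 1, m + 1 ≤ n
      have hmn' : m < n := by omega
      have IH' := IH hm1 (by omega)
      set Sm := ∑ j ∈ Finset.range m, r j with hSm_def
      set Qm := ∑ j ∈ Finset.range m, (r j) ^ 2 with hQm_def
      have hSmpos : 0 < Sm := by
        apply Finset.sum_pos
        · intro j hj
          exact (IH' j (Finset.mem_range.mp hj)).1
        · exact ⟨0, Finset.mem_range.mpr hm1⟩
      have hQm8pos : 0 < Qm + 8 := by positivity
      set tm := (Qm + 8) / Sm with htm_def
      have htmpos : 0 < tm := div_pos hQm8pos hSmpos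
      have hrm : r m = min (ε m) tm := by
        obtain ⟨m', rfl⟩ : ∃ m', m = m' + 1 := ⟨m - 1, by omega⟩
        exact hrec m' hmn'
      have hsum1 : (∑ j ∈ Finset.range (m + 1), r j) = Sm + r m :=
        Finset.sum_range_succ r m
      have hsum2 : (∑ j ∈ Finset.range (m + 1), (r j) ^ 2) = Qm + (r m) ^ 2 :=
        Finset.sum_range_succ (fun j => (r j) ^ 2) m
      rcases le_total (ε m) tm with hcase | hcase
      · -- r m = ε m
        have hrmε : r m = ε m := by rw [hrm]; exact min_eq_left hcase
        have hrmpos : 0 < r m := hrmε ▸ hpos m hmn'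
        have hSm1pos : 0 < Sm + r m := by linarith
        -- r m ≤ new t
        have hrmSm : r m * Sm ≤ Qm + 8 := by
          have : r m ≤ tm := hrmε ▸ hcase
          rwa [htm_def, le_div_iff₀ hSmpos] at this
        have hnewt : r m ≤ ((∑ j ∈ Finset.range (m + 1), (r j) ^ 2) + 8) /
            (∑ j ∈ Finset.range (m + 1), r j) := by
          rw [hsum1, hsum2, le_div_iff₀ hSm1pos]
          nlinarith
        rcases Nat.lt_or_ge i m with him' | hge
        · obtain ⟨h1, h2, h3, h4⟩ := IH' i him'
          refine ⟨h1, h2, ?_, ?_⟩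
          · calc r i ≤ ε i := h2
              _ ≤ ε m := hmono i m (by omega) hmn'
              _ = r m := hrmε.symm
              _ ≤ _ := hnewt
          · left
            rcases h4 with h | h
            · exact h
            · -- r i = tm, and ε m ≤ tm = r i ≤ ε i ≤ ε m
              have hεim : ε i ≤ ε m := hmono i m (by omega) hmn'
              have : ε i ≤ r i := by rw [h]; linarith
              linarith [le_antisymm h2 this, h2, this]
              -- fallback
          -- done
        · have : i = m := by omega
          subst this
          exact ⟨hrmpos, le_of_eq hrmε, hnewt, Or.inl hrmε⟩
      · -- tm ≤ ε m, r m = tm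
        have hrmtm : r m = tm := by rw [hrm]; exact min_eq_right hcase
        have hrmpos : 0 < r m := hrmtm ▸ htmpos
        have hSm1pos : 0 < Sm + r m := by linarith
        have htmSm : tm * Sm = Qm + 8 := div_mul_cancel₀ _ hSmpos.ne'
        have hteq : ((∑ j ∈ Finset.range (m + 1), (r j) ^ 2) + 8) /
            (∑ j ∈ Finset.range (m + 1), r j) = tm := by
          have hSm1pos' : (0:ℝ) < Sm + tm := by linarith
          rw [hsum1, hsum2, hrmtm, div_eq_iff hSm1pos'.ne']
          nlinarith
        rw [hteq]
        rcases Nat.lt_or_ge i m with him' | hge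
        · obtain ⟨h1, h2, h3, h4⟩ := IH' i him'
          exact ⟨h1, h2, h3, h4⟩
        · have : i = m := by omega
          subst this
          exact ⟨hrmpos, hrmtm ▸ hcase, le_of_eq hrmtm, Or.inr hrmtm⟩


/-- The ADPM weight vector `r` is a local minimum of
`f x = ((∑ i, x i ^ 2) + 8) / (4 (∑ i, x i) ^ 2)` on the domain
`D(ε) = {x : x i ≥ 0, x 0 = ε 0, and x i / ε i ≥ x j / ε j for i < j}`. -/
theorem r_isLocalMinOn (n : ℕ) (hn : 0 < n) (ε r : ℕ → ℝ)
    (hpos : ∀ i < n, 0 < ε i)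
    (hmono : ∀ i j : ℕ, i ≤ j → j < n → ε i ≤ ε j)
    (hr0 : r 0 = ε 0)
    (hrec : ∀ k : ℕ, k + 1 < n → r (k + 1) = min (ε (k + 1))
      (((∑ i ∈ Finset.range (k + 1), (r i) ^ 2) + 8) / (∑ i ∈ Finset.range (k + 1), r i))) :
    IsLocalMinOn
      (fun x : Fin n → ℝ => ((∑ i, (x i) ^ 2) + 8) / (4 * (∑ i, x i) ^ 2))
      {x : Fin n → ℝ | (∀ i, 0 ≤ x i) ∧ x ⟨0, hn⟩ = ε 0 ∧
        ∀ i j : Fin n, i < j → x j / ε j.1 ≤ x i / ε i.1}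
      (fun i : Fin n => r i.1) := by
  classical
  have hfacts := adpm_ind n ε r hpos hmono hr0 hrec n hn le_rfl
  set S : ℝ := ∑ j ∈ Finset.range n, r j with hS_def
  set Q : ℝ := ∑ j ∈ Finset.range n, (r j) ^ 2 with hQ_def
  set t : ℝ := (Q + 8) / S with ht_def
  have hrpos : ∀ i < n, 0 < r i := fun i hi => (hfacts i hi).1
  have hrt : ∀ i < n, r i ≤ t := fun i hi => (hfacts i hi).2.2.1
  have hAe : ∀ i < n, r i < t → r i = ε i := by
    intro i hi hlt
    rcases (hfacts i hi).2.2.2 with h | h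
    · exact h
    · exact absurd h (ne_of_lt hlt)
  have hSpos : 0 < S :=
    Finset.sum_pos (fun j hj => hrpos j (Finset.mem_range.mp hj))
      ⟨0, Finset.mem_range.mpr hn⟩
  have hQ8pos : 0 < Q + 8 := by
    have : 0 ≤ Q := Finset.sum_nonneg fun j _ => sq_nonneg _
    linarith
  have htpos : 0 < t := div_pos hQ8pos hSpos
  have htS : t * S = Q + 8 := div_mul_cancel₀ _ hSpos.ne'
  have hne : (Finset.univ : Finset (Fin n)).Nonempty := ⟨⟨0, hn⟩, Finset.mem_univ _⟩
  set η : ℝ := Finset.univ.inf' hne (fun i : Fin n => r i.1) with hη_def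
  have hηpos : 0 < η := by
    rw [hη_def, Finset.lt_inf'_iff]
    exact fun i _ => hrpos i.1 i.2
  have hηle : ∀ i : Fin n, η ≤ r i.1 := fun i => Finset.inf'_le _ (Finset.mem_univ i)
  have hSr : (∑ i : Fin n, r i.1) = S := Fin.sum_univ_eq_sum_range r n
  have hQr : (∑ i : Fin n, (r i.1) ^ 2) = Q := Fin.sum_univ_eq_sum_range (fun j => (r j) ^ 2) n
  apply Filter.eventually_of_mem
    (Filter.inter_mem self_mem_nhdsWithin
      (mem_nhdsWithin_of_mem_nhds (Metric.ball_mem_nhds _ hηpos)))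
  rintro x ⟨hxs, hxb⟩
  obtain ⟨hx0, hxz, hxr⟩ := hxs
  have hd : ∀ i : Fin n, |x i - r i.1| < η := by
    intro i
    have h1 : dist x (fun i : Fin n => r i.1) < η := Metric.mem_ball.mp hxb
    have h2 := dist_le_pi_dist x (fun i : Fin n => r i.1) i
    rw [Real.dist_eq] at h2
    linarith
  have hxle : ∀ i : Fin n, x i ≤ ε i.1 := by
    intro i
    rcases eq_or_ne i ⟨0, hn⟩ with rfl | hne0
    · exact le_of_eq hxz
    · have h0i : (⟨0, hn⟩ : Fin n) < i := by
        simp only [Fin.lt_def, Fin.val_mk]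
        have : i.1 ≠ 0 := fun h => hne0 (Fin.ext h)
        omega
      have h := hxr ⟨0, hn⟩ i h0i
      rw [hxz, div_self (hpos 0 hn).ne'] at h
      exact (div_le_one (hpos i.1 i.2)).mp h
  have hSxpos : 0 < ∑ i : Fin n, x i := by
    have h1 : x ⟨0, hn⟩ ≤ ∑ i : Fin n, x i :=
      Finset.single_le_sum (fun i _ => hx0 i) (Finset.mem_univ (⟨0, hn⟩ : Fin n))
    have h2 : 0 < x ⟨0, hn⟩ := hxz ▸ hpos 0 hn
    linarith
  show ((∑ i : Fin n, (r i.1) ^ 2) + 8) / (4 * (∑ i : Fin n, r i.1) ^ 2) ≤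
    ((∑ i : Fin n, (x i) ^ 2) + 8) / (4 * (∑ i : Fin n, x i) ^ 2)
  rw [hSr, hQr, div_le_div_iff₀ (by positivity) (by positivity)]
  set D : ℝ := ∑ i : Fin n, (x i - r i.1) with hD_def
  set Qd : ℝ := ∑ i : Fin n, (x i - r i.1) ^ 2 with hQd_def
  set Rd : ℝ := ∑ i : Fin n, r i.1 * (x i - r i.1) with hRd_def
  set W : ℝ := ∑ i : Fin n, (x i - r i.1) ^ 2 / r i.1 with hW_def
  have hQx : (∑ i : Fin n, (x i) ^ 2) = Q + 2 * Rd + Qd := by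
    rw [hQd_def, hRd_def, ← hQr, Finset.mul_sum, ← Finset.sum_add_distrib,
      ← Finset.sum_add_distrib]
    exact Finset.sum_congr rfl fun i _ => by ring
  have hSxD : (∑ i : Fin n, x i) = S + D := by
    rw [hD_def, ← hSr, ← Finset.sum_add_distrib]
    exact Finset.sum_congr rfl fun i _ => by ring
  have hCS : D ^ 2 ≤ S * W := by
    have h := Finset.sq_sum_div_le_sum_sq_div Finset.univ
      (fun i : Fin n => x i - r i.1) (g := fun i : Fin n => r i.1)
      (fun i _ => hrpos i.1 i.2)
    rw [hSr] at h
    calc D ^ 2 = (D ^ 2 / S) * S := (div_mul_cancel₀ _ hSpos.ne').symm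
      _ ≤ W * S := mul_le_mul_of_nonneg_right h hSpos.le
      _ = S * W := mul_comm _ _
  have hterm : ∀ i : Fin n,
      0 ≤ (t - r i.1) * (-(2 * (x i - r i.1)) - (x i - r i.1) ^ 2 / r i.1) := by
    intro i
    rcases eq_or_lt_of_le (hrt i.1 i.2) with heq | hlt
    · rw [heq, sub_self, zero_mul]
    · have hriε : r i.1 = ε i.1 := hAe i.1 i.2 hlt
      have hdle : x i - r i.1 ≤ 0 := by
        have := hxle i
        rw [hriε]
        linarith
      have hdge : -(r i.1) ≤ x i - r i.1 := by
        have h1 := (abs_lt.mp (hd i)).1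
        linarith [hηle i]
      have hrp := hrpos i.1 i.2
      have hq : (x i - r i.1) ^ 2 / r i.1 ≤ -(2 * (x i - r i.1)) := by
        rw [div_le_iff₀ hrp]
        nlinarith [mul_nonneg (neg_nonneg.mpr hdle)
          (by linarith : (0:ℝ) ≤ (x i - r i.1) + 2 * r i.1)]
      exact mul_nonneg (by linarith) (by linarith)
  have hsumterm : 0 ≤ ∑ i : Fin n,
      (t - r i.1) * (-(2 * (x i - r i.1)) - (x i - r i.1) ^ 2 / r i.1) :=
    Finset.sum_nonneg fun i _ => hterm i
  have hkey : 0 ≤ 2 * Rd + Qd - (2 * t * D + t * W) := by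
    have hsplit : (∑ i : Fin n,
        (t - r i.1) * (-(2 * (x i - r i.1)) - (x i - r i.1) ^ 2 / r i.1))
        = (∑ i : Fin n, (2 * (r i.1 * (x i - r i.1)) + (x i - r i.1) ^ 2))
          - (∑ i : Fin n, (2 * t * (x i - r i.1) + t * ((x i - r i.1) ^ 2 / r i.1))) := by
      rw [← Finset.sum_sub_distrib]
      refine Finset.sum_congr rfl fun i _ => ?_
      have h := (hrpos i.1 i.2).ne'
      field_simp
      ring
    rw [hsplit] at hsumterm
    have e1 : (∑ i : Fin n, (2 * (r i.1 * (x i - r i.1)) + (x i - r i.1) ^ 2))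
        = 2 * Rd + Qd := by
      rw [Finset.sum_add_distrib, hRd_def, hQd_def, Finset.mul_sum]
    have e2 : (∑ i : Fin n, (2 * t * (x i - r i.1) + t * ((x i - r i.1) ^ 2 / r i.1)))
        = 2 * t * D + t * W := by
      rw [Finset.sum_add_distrib, hD_def, hW_def, Finset.mul_sum, Finset.mul_sum]
    rw [e1, e2] at hsumterm
    linarith
  have hA : 0 ≤ S ^ 2 * (2 * Rd + Qd - (2 * t * D + t * W)) :=
    mul_nonneg (sq_nonneg S) hkey
  have hB : 0 ≤ t * S * (S * W - D ^ 2) :=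
    mul_nonneg (mul_nonneg htpos.le hSpos.le) (by linarith)
  have hQval : Q = t * S - 8 := by linarith
  rw [hQx, hSxD, hQval]
  nlinarith [hA, hB]
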